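/- Suppose {d_1,…,d_n} is a basis of an algebra D over F with quadratic form N_D, satisfying: d_1 = 1; conj(d_i) = −d_i for i > 1; d_i d_j ∈ ±{d_1,…,d_n}; d_i d_i = −1 for i > 1; d_i d_j = −d_j d_i for 1 < i < j; conj(d_i d_j) = conj(d_j)·conj(d_i) and conj(conj(d_i)) = d_i; and the alternative/flexible identities d_i(d_i d_j) = (d_i d_i)d_j, d_i(d_j d_j) = (d_i d_j)d_j, (d_i d_j)d_i = d_i(d_j d_i). Let (C,N_C) be the standard doubling of (D,N_D) and set c_i = (d_i,0), c_{i+n} = (0,d_i). Then {c_1,…,c_{2n}} is a basis of C satisfying the same seven properties (with 2n in place of n). -/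

import Mathlib

/-- Lemma on systematic bases in the standard Cayley–Dickson process: if a basis
`d = b` of the algebra `D` satisfies properties (i)–(vii), then the family
`c i = (d i, 0)`, `c (i+n) = (0, d i)` is a basis of the standard doubling
`C = D ⊕ D` satisfying the analogous properties (with `2n` in place of `n`).
Here conjugation is defined from the quadratic form by `conj(x) = ⟨x,1⟩·1 - x`,
the doubled multiplication is `(x,y)(u,v) = (xu - conj(v)y, vx + y·conj(u))`
(i.e. `λ = -1`), and `N_C((x,y)) = N_D(x) + N_D(y)`. -/
theorem stmt19 {F D : Type} [Field F] [NonAssocRing D] [Module F D]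
    (N : QuadraticForm F D)
    (conjD : D → D)
    (hconjD : ∀ x : D, conjD x = (N (x + 1) - N x - N 1) • (1 : D) - x)
    (NC : D × D → F)
    (hNC : ∀ p : D × D, NC p = N p.1 + N p.2)
    (mC : D × D → D × D → D × D)
    (hmC : ∀ p q : D × D,
        mC p q = (p.1 * q.1 - conjD q.2 * p.2, q.2 * p.1 + p.2 * conjD q.1))
    (conjC : D × D → D × D)
    (hconjC : ∀ p : D × D,
        conjC p = (NC (p + ((1 : D), (0 : D))) - NC p - NC ((1 : D), (0 : D)))
            • (((1 : D), (0 : D)) : D × D) - p)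
    (n : ℕ) (hn : 0 < n)
    (b : Module.Basis (Fin n) F D)
    (h1 : b ⟨0, hn⟩ = 1)
    (h2 : ∀ i : Fin n, i.1 ≠ 0 → conjD (b i) = -(b i))
    (h3 : ∀ i j : Fin n, ∃ k : Fin n, b i * b j = b k ∨ b i * b j = -(b k))
    (h4 : ∀ i : Fin n, i.1 ≠ 0 → b i * b i = -1)
    (h5 : ∀ i j : Fin n, 0 < i.1 → i.1 < j.1 → b i * b j = -(b j * b i))
    (h6 : ∀ i j : Fin n, conjD (b i * b j) = conjD (b j) * conjD (b i) ∧
        conjD (conjD (b i)) = b i)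
    (h7 : ∀ i j : Fin n,
        b i * (b i * b j) = (b i * b i) * b j ∧
        b i * (b j * b j) = (b i * b j) * b j ∧
        (b i * b j) * b i = b i * (b j * b i))
    (c : Fin (2 * n) → D × D)
    (hc : ∀ i : Fin (2 * n),
        c i = if h : i.1 < n then ((b ⟨i.1, h⟩, 0) : D × D)
          else ((0, b ⟨i.1 - n, by have := i.isLt; omega⟩) : D × D)) :
    (∃ bc : Module.Basis (Fin (2 * n)) F (D × D), ∀ i, bc i = c i) ∧
    c ⟨0, by omega⟩ = ((1 : D), (0 : D)) ∧
    (∀ i : Fin (2 * n), i.1 ≠ 0 → conjC (c i) = -(c i)) ∧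
    (∀ i j : Fin (2 * n), ∃ k : Fin (2 * n),
        mC (c i) (c j) = c k ∨ mC (c i) (c j) = -(c k)) ∧
    (∀ i : Fin (2 * n), i.1 ≠ 0 → mC (c i) (c i) = -(((1 : D), (0 : D)) : D × D)) ∧
    (∀ i j : Fin (2 * n), 0 < i.1 → i.1 < j.1 →
        mC (c i) (c j) = -(mC (c j) (c i))) ∧
    (∀ i j : Fin (2 * n),
        conjC (mC (c i) (c j)) = mC (conjC (c j)) (conjC (c i)) ∧
        conjC (conjC (c i)) = c i) ∧
    (∀ i j : Fin (2 * n),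
        mC (c i) (mC (c i) (c j)) = mC (mC (c i) (c i)) (c j) ∧
        mC (c i) (mC (c j) (c j)) = mC (mC (c i) (c j)) (c j) ∧
        mC (mC (c i) (c j)) (c i) = mC (c i) (mC (c j) (c i))) := by
  classical
  -- `1 ≠ 0` in `D`
  have hone : (1 : D) ≠ 0 := by
    have hz := b.ne_zero ⟨0, hn⟩
    rw [h1] at hz; exact hz
  have hpol : ∀ x : D, N (x + 1) - N x - N 1 = QuadraticMap.polar N x 1 := fun _ => rfl
  have hKneg : ∀ x : D, conjD (-x) = -(conjD x) := by
    intro x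
    rw [hconjD, hconjD, hpol, hpol, QuadraticMap.polar_neg_left, neg_smul]
    abel
  have hK0 : conjD (0 : D) = 0 := by
    rw [hconjD]; simp
  -- conjD 1 = 1
  have lemA : conjD (1 : D) = 1 := by
    set t : F := N (1 + 1) - N 1 - N 1 with ht
    have hc1 : conjD (1 : D) = t • (1 : D) - 1 := by rw [hconjD]
    have e2 := (h6 ⟨0, hn⟩ ⟨0, hn⟩).2
    rw [h1] at e2
    have e1 := (h6 ⟨0, hn⟩ ⟨0, hn⟩).1
    rw [h1, one_mul] at e1
    have hp1 : QuadraticMap.polar N (1 : D) 1 = t := rfl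
    have hco : conjD (conjD (1 : D)) = (t * t - t) • (1 : D) - (t • (1 : D) - 1) := by
      rw [hc1]
      rw [hconjD, hpol]
      have hx : QuadraticMap.polar N (t • (1 : D) - 1) 1 = t * t - t := by
        rw [sub_eq_add_neg, QuadraticMap.polar_add_left, QuadraticMap.polar_smul_left,
          QuadraticMap.polar_neg_left, hp1, smul_eq_mul]
        ring
      rw [hx]
    have e2' : (t * t - t) • (1 : D) - (t • (1 : D) - 1) = 1 := by rw [← hco]; exact e2
    have h'' : (t * t - t) • (1 : D) = t • (1 : D) := by
      have h3' := sub_eq_iff_eq_add.mp e2'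
      rw [h3']; abel
    have key : (t * t - 2 * t) • (1 : D) = 0 := by
      have : (t * t - 2 * t) = (t * t - t) - t := by ring
      rw [this, sub_smul, h'', sub_self]
    have ht0 : t * t - 2 * t = 0 := by
      by_contra hne'
      apply hone
      calc (1 : D) = ((t * t - 2 * t)⁻¹ * (t * t - 2 * t)) • (1 : D) := by
            rw [inv_mul_cancel₀ hne', one_smul]
        _ = (t * t - 2 * t)⁻¹ • ((t * t - 2 * t) • (1 : D)) := by rw [mul_smul]
        _ = 0 := by rw [key, smul_zero]
    have htt : t = 0 ∨ t = 2 := by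
      rcases mul_eq_zero.mp (show t * (t - 2) = 0 by linear_combination ht0) with h | h
      · exact Or.inl h
      · exact Or.inr (sub_eq_zero.mp h)
    rcases htt with h0 | ht2
    · have hm1 : conjD (1 : D) = -1 := by rw [hc1, h0, zero_smul, zero_sub]
      rw [hm1] at e1
      rw [neg_mul_neg, one_mul] at e1
      rw [hm1]
      exact e1
    · rw [hc1, ht2, two_smul]; abel
  -- basic facts about the basis of D
  have hb0 : ∀ i : Fin n, i.1 = 0 → b i = 1 := by
    intro i hi
    rw [show i = ⟨0, hn⟩ from Fin.ext hi, h1]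
  have hK : ∀ i : Fin n, conjD (b i) = b i ∨ conjD (b i) = -(b i) := by
    intro i
    by_cases hi : i.1 = 0
    · left; rw [hb0 i hi, lemA]
    · right; exact h2 i hi
  have L0 : ∀ i : Fin n, conjD (b i) * b i = 1 := by
    intro i
    by_cases hi : i.1 = 0
    · rw [hb0 i hi, lemA, one_mul]
    · rw [h2 i hi, neg_mul, h4 i hi, neg_neg]
  have L9 : ∀ k l : Fin n, conjD (conjD (b l) * b k) = conjD (b k) * b l := by
    intro k l
    by_cases hl : l.1 = 0
    · rw [hb0 l hl, lemA, one_mul, mul_one]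
    · simp only [h2 l hl, neg_mul, hKneg, (h6 l k).1, mul_neg, neg_neg]
  have L1 : ∀ k l : Fin n, conjD (b k * conjD (b l)) * b k = (conjD (b k) * b k) * b l := by
    intro k l
    rw [L0, one_mul]
    by_cases hl : l.1 = 0
    · rw [hb0 l hl, lemA, mul_one]
      exact L0 k
    · simp only [h2 l hl, mul_neg, hKneg, (h6 k l).1, neg_mul, neg_neg]
      by_cases hk : k.1 = 0
      · rw [hb0 k hk, lemA, mul_one, mul_one]
      · simp only [h2 k hk, mul_neg, neg_mul, neg_neg]
        rw [← (h7 l k).2.1, h4 k hk, mul_neg, mul_one, neg_neg]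
  have L2 : ∀ k l : Fin n, b k * conjD (conjD (b l) * b k) = b l * (conjD (b k) * b k) := by
    intro k l
    rw [L9 k l, L0, mul_one]
    by_cases hk : k.1 = 0
    · rw [hb0 k hk, lemA, one_mul, one_mul]
    · simp only [h2 k hk, neg_mul, mul_neg]
      rw [(h7 k l).1, h4 k hk, neg_mul, one_mul, neg_neg]
  have L3 : ∀ k l : Fin n, b k * (conjD (b l) * b l) = conjD (b l) * (b l * b k) := by
    intro k l
    rw [L0, mul_one]
    by_cases hl : l.1 = 0
    · rw [hb0 l hl, lemA, one_mul, one_mul]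
    · simp only [h2 l hl, neg_mul]
      rw [(h7 l k).1, h4 l hl, neg_mul, one_mul, neg_neg]
  have L4 : ∀ k l : Fin n, b k * conjD (b l * b l) = (b k * conjD (b l)) * conjD (b l) := by
    intro k l
    rw [(h6 l l).1]
    rcases hK l with hl | hl <;> rw [hl]
    · exact (h7 k l).2.1
    · rw [neg_mul_neg, mul_neg, mul_neg, neg_mul, neg_neg]
      exact (h7 k l).2.1
  have L5 : ∀ k l : Fin n, b k * conjD (conjD (b l) * b l) = b l * (conjD (b l) * b k) := by
    intro k l
    rw [L0, lemA, mul_one]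
    by_cases hl : l.1 = 0
    · rw [hb0 l hl, lemA, one_mul, one_mul]
    · simp only [h2 l hl, neg_mul, mul_neg]
      rw [(h7 l k).1, h4 l hl, neg_mul, one_mul, neg_neg]
  have L6 : ∀ k l : Fin n, (b l * b k) * conjD (b k) = (b l * conjD (b k)) * b k := by
    intro k l
    rcases hK k with hk | hk <;> rw [hk]
    · rw [mul_neg, mul_neg, neg_mul]
  have hsq' : ∀ i : Fin n, b i * b i = 1 ∨ b i * b i = -1 := by
    intro i
    by_cases hi : i.1 = 0
    · left; rw [hb0 i hi, one_mul]
    · right; exact h4 i hi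
  have L7 : ∀ k l : Fin n, conjD (b k) * (b k * conjD (b l)) = conjD (b k * b l) * b k := by
    intro k l
    rw [(h6 k l).1]
    rcases hK k with hk | hk <;> rcases hK l with hl | hl <;> rw [hk, hl] <;>
      rcases hsq' k with hs | hs <;>
      simp only [neg_mul, mul_neg, neg_neg, (h7 k l).1, ← (h7 l k).2.1, hs,
        one_mul, mul_one]
  have L8 : ∀ k l : Fin n, conjD (b l) * b k = conjD (conjD (b k) * b l) := by
    intro k l
    by_cases hk : k.1 = 0
    · rw [hb0 k hk, lemA, one_mul, mul_one]
    · simp only [h2 k hk, neg_mul, hKneg, (h6 k l).1, mul_neg, neg_neg]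
  -- conjC and mC in coordinates
  have hCC : ∀ x y : D, conjC (x, y) = (conjD x, -y) := by
    intro x y
    rw [hconjC, hconjD]
    have hco : NC ((x, y) + ((1 : D), (0 : D))) - NC (x, y) - NC ((1 : D), (0 : D))
        = N (x + 1) - N x - N 1 := by
      rw [hNC, hNC, hNC]
      show N (x + 1) + N (y + 0) - (N x + N y) - (N 1 + N 0) = _
      rw [add_zero, map_zero]
      ring
    rw [hco, Prod.smul_mk, smul_zero, Prod.mk_sub_mk, zero_sub]
  have hm11 : ∀ x u : D, mC (x, 0) (u, 0) = (x * u, 0) := by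
    intro x u; rw [hmC]; simp
  have hm12 : ∀ x v : D, mC (x, 0) (0, v) = (0, v * x) := by
    intro x v; rw [hmC]; simp
  have hm21 : ∀ y u : D, mC (0, y) (u, 0) = (0, y * conjD u) := by
    intro y u; rw [hmC]; simp [hK0]
  have hm22 : ∀ y v : D, mC (0, y) (0, v) = (-(conjD v * y), 0) := by
    intro y v; rw [hmC]; simp [hK0]
  -- the family c in coordinates
  have hcl : ∀ (k : Fin n) (h : (k : ℕ) < 2 * n), c ⟨k.1, h⟩ = (b k, 0) := by
    intro k h
    rw [hc, dif_pos (show ((⟨k.1, h⟩ : Fin (2 * n)) : ℕ) < n from k.isLt)]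
  have hcr : ∀ (k : Fin n) (h : n + (k : ℕ) < 2 * n), c ⟨n + k.1, h⟩ = (0, b k) := by
    intro k h
    rw [hc, dif_neg (show ¬ ((⟨n + k.1, h⟩ : Fin (2 * n)) : ℕ) < n by
      show ¬ (n + k.1 < n); omega)]
    have hv : ∀ (m : ℕ) (hm : m < n), m = (k : ℕ) → b ⟨m, hm⟩ = b k := by
      intro m hm hm2
      subst hm2
      rfl
    exact Prod.ext rfl (hv _ _ (by show n + k.1 - n = k.1; omega))
  have hsplit : ∀ i : Fin (2 * n),
      (∃ (k : Fin n) (h : (k : ℕ) < 2 * n), i = ⟨k.1, h⟩) ∨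
      (∃ (k : Fin n) (h : n + (k : ℕ) < 2 * n), i = ⟨n + k.1, h⟩) := by
    intro i
    by_cases h : i.1 < n
    · exact Or.inl ⟨⟨i.1, h⟩, by omega, Fin.ext rfl⟩
    · have hlt := i.isLt
      refine Or.inr ⟨⟨i.1 - n, by omega⟩, by omega, Fin.ext ?_⟩
      show i.1 = n + (i.1 - n)
      omega
  refine ⟨?_, ?_, ?_, ?_, ?_, ?_, ?_, ?_⟩
  · -- basis
    refine ⟨(b.prod b).reindex (finSumFinEquiv.trans (finCongr (by omega : n + n = 2 * n))), ?_⟩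
    intro i
    rw [Module.Basis.reindex_apply]
    rcases hsplit i with ⟨k, hk2, rfl⟩ | ⟨k, hk2, rfl⟩
    · rw [hcl k hk2]
      have he : (finSumFinEquiv.trans (finCongr (by omega : n + n = 2 * n))).symm
          ⟨k.1, hk2⟩ = Sum.inl k := by
        rw [Equiv.symm_apply_eq]
        apply Fin.ext
        simp
      rw [he]
      ext <;> simp
    · rw [hcr k hk2]
      have he : (finSumFinEquiv.trans (finCongr (by omega : n + n = 2 * n))).symm
          ⟨n + k.1, hk2⟩ = Sum.inr k := by
        rw [Equiv.symm_apply_eq]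
        apply Fin.ext
        simp [Nat.add_comm]
      rw [he]
      ext <;> simp
  · -- c 0 = (1,0)
    have h := hcl ⟨0, hn⟩ (by omega)
    rw [h1] at h
    exact h
  · -- conj of basis vectors
    intro i hi
    rcases hsplit i with ⟨k, hk2, rfl⟩ | ⟨k, hk2, rfl⟩
    · have hk0 : (k : ℕ) ≠ 0 := hi
      rw [hcl k hk2, hCC, h2 k hk0, Prod.neg_mk, neg_zero]
    · rw [hcr k hk2, hCC, hK0, Prod.neg_mk, neg_zero]
  · -- closure
    intro i j
    rcases hsplit i with ⟨k, hk2, rfl⟩ | ⟨k, hk2, rfl⟩ <;>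
      rcases hsplit j with ⟨l, hl2, rfl⟩ | ⟨l, hl2, rfl⟩
    · rw [hcl k hk2, hcl l hl2, hm11]
      obtain ⟨m, hm | hm⟩ := h3 k l
      · exact ⟨⟨m.1, by omega⟩, Or.inl (by rw [hcl m (by omega), hm])⟩
      · exact ⟨⟨m.1, by omega⟩, Or.inr (by rw [hcl m (by omega), hm, Prod.neg_mk, neg_zero])⟩
    · rw [hcl k hk2, hcr l hl2, hm12]
      obtain ⟨m, hm | hm⟩ := h3 l k
      · exact ⟨⟨n + m.1, by omega⟩, Or.inl (by rw [hcr m (by omega), hm])⟩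
      · exact ⟨⟨n + m.1, by omega⟩, Or.inr (by rw [hcr m (by omega), hm, Prod.neg_mk, neg_zero])⟩
    · rw [hcr k hk2, hcl l hl2, hm21]
      rcases hK l with hKl | hKl <;> rw [hKl]
      · obtain ⟨m, hm | hm⟩ := h3 k l
        · exact ⟨⟨n + m.1, by omega⟩, Or.inl (by rw [hcr m (by omega), hm])⟩
        · exact ⟨⟨n + m.1, by omega⟩, Or.inr (by rw [hcr m (by omega), hm, Prod.neg_mk, neg_zero])⟩
      · rw [mul_neg]
        obtain ⟨m, hm | hm⟩ := h3 k l
        · exact ⟨⟨n + m.1, by omega⟩, Or.inr (by rw [hcr m (by omega), hm, Prod.neg_mk, neg_zero])⟩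
        · exact ⟨⟨n + m.1, by omega⟩, Or.inl (by rw [hcr m (by omega), hm, neg_neg])⟩
    · rw [hcr k hk2, hcr l hl2, hm22]
      rcases hK l with hKl | hKl <;> rw [hKl]
      · obtain ⟨m, hm | hm⟩ := h3 l k
        · exact ⟨⟨m.1, by omega⟩, Or.inr (by rw [hcl m (by omega), hm, Prod.neg_mk, neg_zero])⟩
        · exact ⟨⟨m.1, by omega⟩, Or.inl (by rw [hcl m (by omega), hm, neg_neg])⟩
      · rw [neg_mul, neg_neg]
        obtain ⟨m, hm | hm⟩ := h3 l k
        · exact ⟨⟨m.1, by omega⟩, Or.inl (by rw [hcl m (by omega), hm])⟩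
        · exact ⟨⟨m.1, by omega⟩, Or.inr (by rw [hcl m (by omega), hm, Prod.neg_mk, neg_zero])⟩
  · -- squares
    intro i hi
    rcases hsplit i with ⟨k, hk2, rfl⟩ | ⟨k, hk2, rfl⟩
    · have hk0 : (k : ℕ) ≠ 0 := hi
      rw [hcl k hk2, hm11, h4 k hk0, Prod.neg_mk, neg_zero]
    · rw [hcr k hk2, hm22, L0 k, Prod.neg_mk, neg_zero]
  · -- anticommutation
    intro i j hi hj
    rcases hsplit i with ⟨k, hk2, rfl⟩ | ⟨k, hk2, rfl⟩ <;>
      rcases hsplit j with ⟨l, hl2, rfl⟩ | ⟨l, hl2, rfl⟩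
    · have hi' : 0 < (k : ℕ) := hi
      have hj' : (k : ℕ) < (l : ℕ) := hj
      rw [hcl k hk2, hcl l hl2, hm11, hm11, h5 k l hi' hj', Prod.neg_mk, neg_zero]
    · have hi' : 0 < (k : ℕ) := hi
      rw [hcl k hk2, hcr l hl2, hm12, hm21, h2 k (by omega), mul_neg,
        Prod.neg_mk, neg_zero, neg_neg]
    · have hj' : n + (k : ℕ) < (l : ℕ) := hj
      have := l.isLt
      omega
    · have hj' : n + (k : ℕ) < n + (l : ℕ) := hj
      have hl0 : (l : ℕ) ≠ 0 := by omega
      rw [hcr k hk2, hcr l hl2, hm22, hm22, h2 l hl0, neg_mul, neg_neg,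
        Prod.neg_mk, neg_zero, neg_neg]
      by_cases hk0 : (k : ℕ) = 0
      · rw [hb0 k hk0, lemA, one_mul, mul_one]
      · rw [h2 k hk0, neg_mul, h5 k l (by omega) (by omega), neg_neg]
  · -- conjugation is an antihomomorphism and involution
    intro i j
    constructor
    · rcases hsplit i with ⟨k, hk2, rfl⟩ | ⟨k, hk2, rfl⟩ <;>
        rcases hsplit j with ⟨l, hl2, rfl⟩ | ⟨l, hl2, rfl⟩
      · rw [hcl k hk2, hcl l hl2, hm11]
        simp only [hCC, neg_zero]
        rw [hm11, (h6 k l).1]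
      · rw [hcl k hk2, hcr l hl2, hm12]
        simp only [hCC, hK0, neg_zero]
        rw [hm21, (h6 k k).2, neg_mul]
      · rw [hcr k hk2, hcl l hl2, hm21]
        simp only [hCC, hK0, neg_zero]
        rw [hm12, neg_mul]
      · rw [hcr k hk2, hcr l hl2, hm22]
        simp only [hCC, hK0, neg_zero]
        rw [hm22, hKneg, L9 k l, hKneg, neg_mul, neg_neg, mul_neg]
    · rcases hsplit i with ⟨k, hk2, rfl⟩ | ⟨k, hk2, rfl⟩
      · rw [hcl k hk2]
        simp only [hCC, neg_zero]
        rw [(h6 k k).2]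
      · rw [hcr k hk2]
        simp only [hCC, hK0, neg_zero, neg_neg]
  · -- alternative laws
    intro i j
    refine ⟨?_, ?_, ?_⟩
    · rcases hsplit i with ⟨k, hk2, rfl⟩ | ⟨k, hk2, rfl⟩ <;>
        rcases hsplit j with ⟨l, hl2, rfl⟩ | ⟨l, hl2, rfl⟩
      · rw [hcl k hk2, hcl l hl2]
        simp only [hm11]
        rw [(h7 k l).1]
      · rw [hcl k hk2, hcr l hl2]
        simp only [hm11, hm12]
        rw [(h7 l k).2.1]
      · rw [hcr k hk2, hcl l hl2]
        simp only [hm21, hm22, hm11]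
        rw [L1 k l, neg_mul]
      · rw [hcr k hk2, hcr l hl2]
        simp only [hm21, hm22, hm12]
        rw [hKneg, mul_neg, mul_neg, L2 k l]
    · rcases hsplit i with ⟨k, hk2, rfl⟩ | ⟨k, hk2, rfl⟩ <;>
        rcases hsplit j with ⟨l, hl2, rfl⟩ | ⟨l, hl2, rfl⟩
      · rw [hcl k hk2, hcl l hl2]
        simp only [hm11]
        rw [(h7 k l).2.1]
      · rw [hcl k hk2, hcr l hl2]
        simp only [hm11, hm12, hm22]
        rw [mul_neg, L3 k l]
      · rw [hcr k hk2, hcl l hl2]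
        simp only [hm11, hm21]
        rw [L4 k l]
      · rw [hcr k hk2, hcr l hl2]
        simp only [hm21, hm22, hm12]
        rw [hKneg, mul_neg, mul_neg, L5 k l]
    · rcases hsplit i with ⟨k, hk2, rfl⟩ | ⟨k, hk2, rfl⟩ <;>
        rcases hsplit j with ⟨l, hl2, rfl⟩ | ⟨l, hl2, rfl⟩
      · rw [hcl k hk2, hcl l hl2]
        simp only [hm11]
        rw [(h7 k l).2.2]
      · rw [hcl k hk2, hcr l hl2]
        simp only [hm12, hm21]
        rw [L6 k l]
      · rw [hcr k hk2, hcl l hl2]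
        simp only [hm21, hm22, hm11, hm12]
        rw [L7 k l]
      · rw [hcr k hk2, hcr l hl2]
        simp only [hm12, hm21, hm22]
        rw [hKneg, ← L8 k l]
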